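/- arXiv:1607.06887 — 2 statements merged into one kernel-verified Lean document; each statement's English description precedes it below -/
import Mathlib

section
/- For a real ν > 0 and natural number n with n < ν, ∫_{-∞}^0 x^n (1 + x²/ν)^{-(ν+1)/2} dx = (-1)^n · (ν^{(n+1)/2}/2) · B((ν-n)/2, (1+n)/2), where B is the Beta function. -/
open MeasureTheory Real Set


lemma beta_Ioo' {a b : ℝ} (ha : 0 < a) (hb : 0 < b) :
    ∫ x in Ioo (0:ℝ) 1, x ^ (a - 1) * (1 - x) ^ (b - 1) =
      Real.Gamma a * Real.Gamma b / Real.Gamma (a + b) := by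
  have hab : Real.Gamma (a + b) ≠ 0 := (Real.Gamma_pos_of_pos (by linarith)).ne'
  have key := Complex.Gamma_mul_Gamma_eq_betaIntegral (s := (a:ℂ)) (t := (b:ℂ))
      (by simpa using ha) (by simpa using hb)
  have hbeta : Complex.betaIntegral a b =
      ((∫ x in (0:ℝ)..1, x ^ (a - 1) * (1 - x) ^ (b - 1) : ℝ) : ℂ) := by
    rw [Complex.betaIntegral, ← intervalIntegral.integral_ofReal]
    apply intervalIntegral.integral_congr
    intro x hx
    rw [Set.uIcc_of_le (by norm_num)] at hx
    dsimp only
    rw [show ((a:ℂ)-1) = ((a-1:ℝ):ℂ) by push_cast; ring,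
      show ((b:ℂ)-1) = ((b-1:ℝ):ℂ) by push_cast; ring,
      show (1 - (x:ℂ)) = ((1-x:ℝ):ℂ) by push_cast; ring,
      ← Complex.ofReal_cpow hx.1, ← Complex.ofReal_cpow (by linarith [hx.2])]
    push_cast
    ring
  rw [hbeta, ← Complex.ofReal_add, Complex.Gamma_ofReal, Complex.Gamma_ofReal,
    Complex.Gamma_ofReal] at key
  have : (↑(Real.Gamma a * Real.Gamma b) : ℂ) =
      ↑(Real.Gamma (a + b) * ∫ x in (0:ℝ)..1, x ^ (a - 1) * (1 - x) ^ (b - 1)) := by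
    push_cast; exact key
  have hreal := Complex.ofReal_injective this
  have h2 : (∫ x in (0:ℝ)..1, x ^ (a - 1) * (1 - x) ^ (b - 1)) =
      Real.Gamma a * Real.Gamma b / Real.Gamma (a + b) := by
    field_simp [mul_comm] at hreal ⊢
    linarith [hreal]
  rw [← h2, intervalIntegral.integral_of_le (by norm_num),
    ← MeasureTheory.integral_Ioc_eq_integral_Ioo]


lemma beta_Ioi' {a b : ℝ} (ha : 0 < a) (hb : 0 < b) :
    ∫ u in Set.Ioi (0:ℝ), u ^ (a - 1) * (1 + u) ^ (-(a + b)) =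
      Real.Gamma a * Real.Gamma b / Real.Gamma (a + b) := by
  have hIoo := beta_Ioo' ha hb
  set f : ℝ → ℝ := fun x => x / (1 - x) with hf
  set f' : ℝ → ℝ := fun x => ((1 - x) ^ 2)⁻¹ with hf'
  have hderiv : ∀ x ∈ Ioo (0:ℝ) 1, HasDerivWithinAt f (f' x) (Ioo 0 1) x := by
    intro x hx
    have h1x : (1 : ℝ) - x ≠ 0 := ne_of_gt (by linarith [hx.2] : (0:ℝ) < 1 - x)
    have : HasDerivAt f ((1 * (1 - x) - x * (0 - 1)) / (1 - x) ^ 2) x :=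
      (hasDerivAt_id x).div ((hasDerivAt_const x 1).sub (hasDerivAt_id x)) h1x
    convert this.hasDerivWithinAt using 1
    show ((1 - x) ^ 2)⁻¹ = _
    rw [inv_eq_one_div]; congr 1; ring
    all_goals rfl
  have hinj : InjOn f (Ioo (0:ℝ) 1) := by
    intro x hx y hy hxy
    have h1x : (0:ℝ) < 1 - x := by linarith [hx.2]
    have h1y : (0:ℝ) < 1 - y := by linarith [hy.2]
    rw [hf, div_eq_div_iff h1x.ne' h1y.ne'] at hxy
    nlinarith
  have himg : f '' Ioo (0:ℝ) 1 = Ioi 0 := by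
    ext u
    constructor
    · rintro ⟨x, hx, rfl⟩
      exact div_pos hx.1 (by linarith [hx.2])
    · intro hu
      have hu' : (0:ℝ) < u := hu
      have h1u : (0:ℝ) < 1 + u := by linarith
      refine ⟨u / (1 + u), ⟨div_pos hu' h1u, by rw [div_lt_one h1u]; linarith⟩, ?_⟩
      show u / (1 + u) / (1 - u / (1 + u)) = u
      rw [show (1:ℝ) - u / (1 + u) = (1 + u)⁻¹ by
          field_simp; ring]
      rw [div_inv_eq_mul, div_mul_cancel₀ _ h1u.ne']
  rw [← himg, integral_image_eq_integral_abs_deriv_smul measurableSet_Ioo hderiv hinj, ← hIoo]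
  apply setIntegral_congr_fun measurableSet_Ioo
  intro x hx
  have hx0 : (0:ℝ) < x := hx.1
  have h1x : (0:ℝ) < 1 - x := by linarith [hx.2]
  have e2 : 1 + f x = (1 - x)⁻¹ := by rw [hf]; field_simp; ring
  have e1 : (f x) ^ (a - 1) = x ^ (a - 1) * (1 - x) ^ (-(a - 1)) := by
    rw [hf, Real.div_rpow hx0.le h1x.le, Real.rpow_neg h1x.le, div_eq_mul_inv]
  have e3 : ((1 - x)⁻¹) ^ (-(a + b)) = (1 - x) ^ (a + b) := by
    rw [Real.inv_rpow h1x.le, ← Real.rpow_neg h1x.le, neg_neg]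
  have e4 : |f' x| = (1 - x) ^ (-2 : ℝ) := by
    show |((1 - x) ^ 2)⁻¹| = _
    rw [abs_of_pos (by positivity), ← Real.rpow_natCast (1 - x) 2,
      ← Real.rpow_neg h1x.le]
    norm_num
  dsimp only
  rw [smul_eq_mul, e2, e1, e3, e4]
  calc (1 - x) ^ (-2 : ℝ) * (x ^ (a - 1) * (1 - x) ^ (-(a - 1)) * (1 - x) ^ (a + b))
      = x ^ (a - 1) * ((1 - x) ^ (-(a - 1)) * (1 - x) ^ (a + b) * (1 - x) ^ (-2 : ℝ)) := by
        ring
    _ = x ^ (a - 1) * (1 - x) ^ (-(a - 1) + (a + b) + -2) := by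
        rw [← Real.rpow_add h1x, ← Real.rpow_add h1x]
    _ = x ^ (a - 1) * (1 - x) ^ (b - 1) := by
        congr 1
        ring_nf

/-- For real `ν > 0` and a natural number `n < ν`,
`∫_{-∞}^0 x^n (1 + x²/ν)^{-(ν+1)/2} dx = (-1)^n (ν^{(n+1)/2}/2) B((ν-n)/2, (1+n)/2)`,
where `B(a,b) = Γ(a)Γ(b)/Γ(a+b)` is the Euler Beta function. -/
theorem integral_pow_student_neg (ν : ℝ) (hν : 0 < ν) (n : ℕ) (hn : (n : ℝ) < ν) :
    (∫ x in Set.Iic (0 : ℝ), x ^ n * (1 + x ^ 2 / ν) ^ (-(ν + 1) / 2)) =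
      (-1 : ℝ) ^ n * (ν ^ (((n : ℝ) + 1) / 2) / 2) *
        (Real.Gamma ((ν - n) / 2) * Real.Gamma ((1 + n) / 2) /
          Real.Gamma ((ν - n) / 2 + (1 + n) / 2)) := by
  have hBeta := beta_Ioi' (a := ((n:ℝ) + 1) / 2) (b := (ν - n) / 2)
    (by positivity) (by linarith)
  have hsν : (0:ℝ) < Real.sqrt ν := Real.sqrt_pos.mpr hν
  set e : ℝ := -(ν + 1) / 2 with he
  set g : ℝ → ℝ := fun x => x ^ n * (1 + x ^ 2 / ν) ^ e with hg
  set h : ℝ → ℝ := fun y => (-1 : ℝ) ^ n * (y ^ n * (1 + y ^ 2 / ν) ^ e) with hh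
  -- Step 1: reflect to Ioi 0
  have step1 : (∫ x in Iic (0:ℝ), g x) = (-1:ℝ) ^ n * ∫ x in Ioi (0:ℝ), g x := by
    have hgh : ∀ x : ℝ, g x = h (-x) := by
      intro x
      simp only [hg, hh, neg_sq]
      rw [← mul_assoc, ← mul_pow, neg_one_mul, neg_neg]
    calc (∫ x in Iic (0:ℝ), g x) = ∫ x in Iic (0:ℝ), h (-x) := by
          simp_rw [← hgh]
      _ = ∫ x in Ioi (-(0:ℝ)), h x := integral_comp_neg_Iic 0 h
      _ = (-1:ℝ)^n * ∫ x in Ioi (0:ℝ), g x := by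
          rw [neg_zero, hh, integral_const_mul]
  -- Step 2: scale x = √ν * y
  have step2 : (∫ x in Ioi (0:ℝ), g x) =
      Real.sqrt ν * ∫ x in Ioi (0:ℝ), (Real.sqrt ν) ^ n * (x ^ n * (1 + x ^ 2) ^ e) := by
    have := integral_comp_mul_left_Ioi g 0 hsν
    rw [mul_zero] at this
    have heq : ∀ x ∈ Ioi (0:ℝ), g (Real.sqrt ν * x) =
        (Real.sqrt ν) ^ n * (x ^ n * (1 + x ^ 2) ^ e) := by
      intro x _
      have h2 : (Real.sqrt ν * x) ^ 2 / ν = x ^ 2 := by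
        rw [mul_pow, Real.sq_sqrt hν.le, mul_comm, mul_div_assoc, div_self hν.ne', mul_one]
      simp only [hg]
      rw [h2, mul_pow, mul_assoc]
    rw [setIntegral_congr_fun measurableSet_Ioi heq] at this
    rw [smul_eq_mul] at this
    field_simp at this ⊢
    linarith [this]
  -- Step 3: substitute y = x^2
  have step3 : (∫ x in Ioi (0:ℝ), x ^ n * (1 + x ^ 2) ^ e) =
      (1/2) * ∫ u in Ioi (0:ℝ), u ^ (((n:ℝ) + 1) / 2 - 1) * (1 + u) ^ e := by
    have key := integral_comp_rpow_Ioi_of_pos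
      (g := fun u => u ^ (((n:ℝ) + 1) / 2 - 1) * (1 + u) ^ e) (p := 2) (by norm_num)
    have heq : ∀ x ∈ Ioi (0:ℝ),
        ((2:ℝ) * x ^ ((2:ℝ) - 1)) • ((x ^ (2:ℝ)) ^ (((n:ℝ) + 1) / 2 - 1) * (1 + x ^ (2:ℝ)) ^ e)
          = 2 * (x ^ n * (1 + x ^ 2) ^ e) := by
      intro x hx
      have hx0 : (0:ℝ) < x := hx
      have hx2 : x ^ (2:ℝ) = x ^ (2:ℕ) := by
        rw [← Real.rpow_natCast x 2]; norm_num
      have hpw : (x ^ (2:ℕ)) ^ (((n:ℝ) + 1) / 2 - 1) = x ^ ((n:ℝ) - 1) := by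
        rw [← Real.rpow_natCast x 2, ← Real.rpow_mul hx0.le]
        congr 1; push_cast; ring
      have hxx : x * x ^ ((n:ℝ) - 1) = x ^ n := by
        nth_rewrite 1 [← Real.rpow_one x]
        rw [← Real.rpow_add hx0, ← Real.rpow_natCast x n]
        congr 1; push_cast; ring
      rw [smul_eq_mul, hx2, hpw, show ((2:ℝ) - 1) = 1 by norm_num, Real.rpow_one]
      rw [show (2:ℝ) * x * (x ^ ((n:ℝ) - 1) * (1 + x ^ (2:ℕ)) ^ e)
            = 2 * ((x * x ^ ((n:ℝ) - 1)) * (1 + x ^ (2:ℕ)) ^ e) by ring, hxx]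
    rw [setIntegral_congr_fun measurableSet_Ioi heq] at key
    rw [MeasureTheory.integral_const_mul] at key
    linarith [key]
  rw [show (-(((n:ℝ) + 1) / 2 + (ν - n) / 2)) = e by rw [he]; push_cast; ring] at hBeta
  rw [step1, step2, MeasureTheory.integral_const_mul, step3, hBeta]
  rw [← Real.rpow_natCast (Real.sqrt ν) n, Real.sqrt_eq_rpow ν, ← Real.rpow_mul hν.le]
  rw [show ((ν - n) / 2 + (1 + n) / 2 : ℝ) = (((n:ℝ) + 1) / 2 + (ν - n) / 2) by push_cast; ring,
    show ((1 + n) / 2 : ℝ) = (((n:ℝ) + 1) / 2) by push_cast; ring]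
  have hpow : ν ^ ((1:ℝ)/2) * ν ^ ((1:ℝ)/2 * (n:ℝ)) = ν ^ (((n:ℝ)+1)/2) := by
    rw [← Real.rpow_add hν]; congr 1; ring
  linear_combination ((-1:ℝ)^n * (1/2) *
    (Real.Gamma (((n:ℝ)+1)/2) * Real.Gamma ((ν-(n:ℝ))/2) /
      Real.Gamma (((n:ℝ)+1)/2+(ν-(n:ℝ))/2))) * hpow
end

section
/- For t > 0, P > 0, α > 2, and 0 < a < b, ∫_a^b (e^{-tPr^{-α}} - 1)·r dr = ((tP)^{2/α}/α)·[Γ(-2/α, tPb^{-α}) - Γ(-2/α, tPa^{-α})] - (b² - a²)/2, where Γ(s, z) = ∫_z^∞ x^{s-1}e^{-x} dx is the upper incomplete Gamma function. -/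
open MeasureTheory

/-- The upper incomplete Gamma function `Γ(s, z) = ∫_z^∞ x^{s-1} e^{-x} dx`. -/
noncomputable def upperGamma (s z : ℝ) : ℝ :=
  ∫ x in Set.Ioi z, x ^ (s - 1) * Real.exp (-x)

lemma integrable_aux {s z : ℝ} (hs : s - 1 ≤ 0) (hz : 0 < z) :
    IntegrableOn (fun x : ℝ => x ^ (s - 1) * Real.exp (-x)) (Set.Ioi z) := by
  have hmeas : AEStronglyMeasurable (fun x : ℝ => x ^ (s - 1) * Real.exp (-x))
      (volume.restrict (Set.Ioi z)) := by
    apply ContinuousOn.aestronglyMeasurable _ measurableSet_Ioi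
    intro x hx
    have hx0 : x ≠ 0 := ne_of_gt (hz.trans hx)
    exact ((Real.continuousAt_rpow_const x (s-1) (Or.inl hx0)).continuousWithinAt.mul
      ((Real.continuous_exp.comp continuous_neg).continuousWithinAt))
  have hint : IntegrableOn (fun x : ℝ => z ^ (s - 1) * Real.exp (-x)) (Set.Ioi z) := by
    have := exp_neg_integrableOn_Ioi z (b := 1) one_pos
    simpa [IntegrableOn] using this.const_mul (z ^ (s - 1))
  refine hint.mono' hmeas ?_
  filter_upwards [ae_restrict_mem measurableSet_Ioi] with x hx
  have hx0 : 0 < x := hz.trans hx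
  rw [norm_mul, Real.norm_rpow_of_nonneg hx0.le, Real.norm_eq_abs,
    abs_of_nonneg hx0.le, Real.norm_eq_abs, Real.abs_exp]
  have : x ^ (s - 1) ≤ z ^ (s - 1) :=
    Real.rpow_le_rpow_of_nonpos hz (le_of_lt hx) hs
  exact mul_le_mul_of_nonneg_right this (Real.exp_pos _).le

lemma gamma_diff {s z₁ z₂ : ℝ} (hs : s - 1 ≤ 0) (h0 : 0 < z₁) (h : z₁ ≤ z₂) :
    upperGamma s z₁ - upperGamma s z₂ = ∫ x in z₁..z₂, x ^ (s - 1) * Real.exp (-x) := by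
  have hi1 := integrable_aux hs h0
  have hi2 := integrable_aux hs (lt_of_lt_of_le h0 h)
  have hsplit : upperGamma s z₁ =
      (∫ x in Set.Ioc z₁ z₂, x ^ (s - 1) * Real.exp (-x)) + upperGamma s z₂ := by
    rw [upperGamma, upperGamma, ← Set.Ioc_union_Ioi_eq_Ioi h,
      setIntegral_union (Set.Ioc_disjoint_Ioi le_rfl) measurableSet_Ioi
      (hi1.mono_set Set.Ioc_subset_Ioi_self) hi2]
  rw [hsplit, intervalIntegral.integral_of_le h]
  ring

lemma sub_int (t P α a b : ℝ) (ht : 0 < t) (hP : 0 < P) (hα : 0 < α)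
    (ha : 0 < a) (hab : a < b) :
    (∫ r in a..b, Real.exp (-(t * P * r ^ (-α))) * r) =
      ((t * P) ^ (2 / α) / α) *
        (upperGamma (-(2 / α)) (t * P * b ^ (-α)) -
          upperGamma (-(2 / α)) (t * P * a ^ (-α))) := by
  have htP : 0 < t * P := mul_pos ht hP
  have hαne : α ≠ 0 := hα.ne'
  set s : ℝ := -(2 / α) with hs
  set f : ℝ → ℝ := fun r => t * P * r ^ (-α) with hf
  set f' : ℝ → ℝ := fun r => t * P * (-α * r ^ (-α - 1)) with hf'
  set g : ℝ → ℝ := fun x => x ^ (s - 1) * Real.exp (-x) with hg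
  have huIcc : Set.uIcc a b = Set.Icc a b := Set.uIcc_of_le hab.le
  have hpos : ∀ r ∈ Set.uIcc a b, 0 < r := by
    intro r hr
    rw [huIcc] at hr
    exact lt_of_lt_of_le ha hr.1
  have hd : ∀ r ∈ Set.uIcc a b, HasDerivAt f (f' r) r := by
    intro r hr
    have := (Real.hasDerivAt_rpow_const (p := -α) (Or.inl (hpos r hr).ne')).const_mul (t * P)
    simpa [hf, hf', mul_comm] using this
  have h' : ContinuousOn f' (Set.uIcc a b) := by
    intro r hr
    exact (continuousWithinAt_const.mul (continuousWithinAt_const.mul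
      (Real.continuousAt_rpow_const r _ (Or.inl (hpos r hr).ne')).continuousWithinAt))
  have himg : f '' Set.uIcc a b ⊆ Set.Ioi 0 := by
    rintro x ⟨r, hr, rfl⟩
    exact mul_pos htP (Real.rpow_pos_of_pos (hpos r hr) _)
  have hgc : ContinuousOn g (f '' Set.uIcc a b) := by
    refine ContinuousOn.mono ?_ himg
    intro x hx
    exact ((Real.continuousAt_rpow_const x _ (Or.inl (ne_of_gt hx))).continuousWithinAt.mul
      ((Real.continuous_exp.comp continuous_neg).continuousWithinAt))
  have key := intervalIntegral.integral_comp_smul_deriv' hd h' hgc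
  have hcong : ∀ r ∈ Set.uIcc a b,
      f' r • g (f r) = (-α * (t * P) ^ s) * (Real.exp (-(t * P * r ^ (-α))) * r) := by
    intro r hr
    have hr0 : 0 < r := hpos r hr
    have hrα : (0:ℝ) < r ^ (-α) := Real.rpow_pos_of_pos hr0 _
    have h1 : (t * P * r ^ (-α)) ^ (s - 1) = (t * P) ^ (s - 1) * r ^ ((-α) * (s - 1)) := by
      rw [Real.mul_rpow htP.le hrα.le, ← Real.rpow_mul hr0.le]
    have h2 : (-α) * (s - 1) = 2 + α := by
      rw [hs]; field_simp; ring
    have h3 : r ^ (-α - 1) * r ^ ((2:ℝ) + α) = r := by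
      rw [← Real.rpow_add hr0]
      have he : -α - 1 + (2 + α) = 1 := by ring
      rw [he, Real.rpow_one]
    have h4 : (t * P) * (t * P) ^ (s - 1) = (t * P) ^ s := by
      nth_rewrite 1 [← Real.rpow_one (t * P)]
      rw [← Real.rpow_add htP]
      ring_nf
    simp only [hf, hf', hg, smul_eq_mul, h1, h2]
    calc t * P * (-α * r ^ (-α - 1)) *
          ((t * P) ^ (s - 1) * r ^ ((2:ℝ) + α) * Real.exp (-(t * P * r ^ (-α))))
        = (-α * ((t*P) * (t*P)^(s-1))) * ((r ^ (-α - 1) * r ^ ((2:ℝ) + α)) *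
            Real.exp (-(t * P * r ^ (-α)))) := by ring
      _ = _ := by rw [h3, h4]; ring
  replace key := (intervalIntegral.integral_congr hcong).symm.trans key
  rw [intervalIntegral.integral_const_mul] at key
  -- now relate RHS of key to upperGamma
  have hfb : 0 < f b := mul_pos htP (Real.rpow_pos_of_pos (ha.trans hab) _)
  have hfle : f b ≤ f a := by
    have := Real.rpow_lt_rpow_of_neg ha hab (neg_lt_zero.mpr hα)
    exact le_of_lt (by
      simpa [hf] using (mul_lt_mul_of_pos_left this htP))
  have hs1 : s - 1 ≤ 0 := by
    rw [hs]
    have : 0 < 2 / α := div_pos two_pos hα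
    linarith
  have hgd := gamma_diff hs1 hfb hfle
  rw [intervalIntegral.integral_symm (f b) (f a)] at key
  have hne : (t * P) ^ s ≠ 0 := (Real.rpow_pos_of_pos htP s).ne'
  have hinv : (t * P) ^ (2 / α) = ((t * P) ^ s)⁻¹ := by
    rw [hs, Real.rpow_neg htP.le, inv_inv]
  have hfa : f a = t * P * a ^ (-α) := rfl
  have hfb' : f b = t * P * b ^ (-α) := rfl
  rw [← hfa, ← hfb', hinv]
  have key' : -α * (t * P) ^ s * ∫ r in a..b, Real.exp (-(t * P * r ^ (-α))) * r
      = -(upperGamma s (f b) - upperGamma s (f a)) := by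
    rw [key, hgd]
  field_simp at key' ⊢
  nlinarith [key']

/-- For `t > 0`, `P > 0`, `α > 2` and `0 < a < b`:
`∫_a^b (e^{-tPr^{-α}} - 1) r dr
  = ((tP)^{2/α}/α)[Γ(-2/α, tPb^{-α}) - Γ(-2/α, tPa^{-α})] - (b²-a²)/2`. -/
theorem cgf_integral_incomplete_gamma (t P α a b : ℝ) (ht : 0 < t)
    (hP : 0 < P) (hα : 2 < α) (ha : 0 < a) (hab : a < b) :
    (∫ r in a..b, (Real.exp (-(t * P * r ^ (-α))) - 1) * r) =
      ((t * P) ^ (2 / α) / α) *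
          (upperGamma (-(2 / α)) (t * P * b ^ (-α)) -
            upperGamma (-(2 / α)) (t * P * a ^ (-α))) -
        (b ^ 2 - a ^ 2) / 2 := by

  have hα0 : (0:ℝ) < α := lt_trans two_pos hα
  have h1 : IntervalIntegrable (fun r => Real.exp (-(t * P * r ^ (-α))) * r) volume a b := by
    apply ContinuousOn.intervalIntegrable
    intro r hr
    have hr0 : r ≠ 0 := by
      rw [Set.uIcc_of_le hab.le] at hr
      exact ne_of_gt (lt_of_lt_of_le ha hr.1)
    exact ((Real.continuous_exp.continuousAt.comp
      ((continuousAt_const.mul (Real.continuousAt_rpow_const r _ (Or.inl hr0))).neg)).mul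
      continuousAt_id).continuousWithinAt
  have h2 : IntervalIntegrable (fun r : ℝ => r) volume a b :=
    continuous_id.intervalIntegrable a b
  simp_rw [sub_mul, one_mul]
  rw [intervalIntegral.integral_sub h1 h2, sub_int t P α a b ht hP hα0 ha hab]
  have hid : (∫ x in a..b, x) = (b ^ 2 - a ^ 2) / 2 := integral_id
  rw [hid]
end
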